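/- Spivey's type formula for the λ-analogue of the r-Lah-Bell polynomials: for all m, n, r ≥ 0 and nonzero real λ, LB_{n+m,λ}^{(r)}(t) = Σ_{j=0}^{m} Σ_{k=0}^{n} C(n,k)·L_λ^r(m,j)·⟨m+j⟩_{n-k}·t^j·λ^{n-k}·LB_{k,λ}^{(r)}(t). -/

import Mathlib

/-- Rising factorial ⟨x⟩ₙ = x(x+1)⋯(x+n-1). -/
noncomputable def risingFac (x : ℝ) (n : ℕ) : ℝ := ∏ i ∈ Finset.range n, (x + i)

/-- Falling factorial (x)ₙ = x(x-1)⋯(x-n+1). -/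
noncomputable def fallingFac (x : ℝ) (n : ℕ) : ℝ := ∏ i ∈ Finset.range n, (x - i)

/-- Lah numbers L(n,k) = (n!/k!)·C(n-1,k-1) for n ≥ k ≥ 1, L(0,0)=1, and 0 for n < k. -/
noncomputable def lah (n k : ℕ) : ℝ :=
  if k ≤ n then (n.factorial : ℝ) / (k.factorial : ℝ) * ((n - 1).choose (k - 1)) else 0

/-- Lah-Bell polynomial LBₙ(x) = Σ_{k=0}^n L(n,k) xᵏ. -/
noncomputable def lahBell (n : ℕ) (x : ℝ) : ℝ := ∑ k ∈ Finset.range (n + 1), lah n k * x ^ k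

/-- r-Lah numbers Lʳ(n,k) = (n!/k!)·C(n+r-1, k+r-1) for n ≥ k, and 0 for n < k. -/
noncomputable def rLah (r n k : ℕ) : ℝ :=
  if k ≤ n then (n.factorial : ℝ) / (k.factorial : ℝ) * ((n + r - 1).choose (k + r - 1)) else 0

/-- r-Lah-Bell polynomial LBₙ⁽ʳ⁾(x) = Σ_{k=0}^n Lʳ(n,k) xᵏ. -/
noncomputable def rLahBell (r n : ℕ) (x : ℝ) : ℝ :=
  ∑ k ∈ Finset.range (n + 1), rLah r n k * x ^ k

/-- Degenerate rising factorial ⟨x⟩_{n,λ} = x(x+λ)⋯(x+(n-1)λ). -/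
noncomputable def degRising (l x : ℝ) (n : ℕ) : ℝ := ∏ i ∈ Finset.range n, (x + i * l)

/-- Degenerate falling factorial (x)_{n,λ} = x(x-λ)⋯(x-(n-1)λ). -/
noncomputable def degFalling (l x : ℝ) (n : ℕ) : ℝ := ∏ i ∈ Finset.range n, (x - i * l)

/-- Degenerate binomial coefficient C_λ(x,k) = (x)_{k,λ}/k!. -/
noncomputable def degChoose (l x : ℝ) (k : ℕ) : ℝ := degFalling l x k / (k.factorial : ℝ)

section SpiveyAux

open Finset

private lemma degRising_succ (l y : ℝ) (n : ℕ) :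
    degRising l y (n + 1) = degRising l y n * (y + n * l) := by
  unfold degRising; rw [Finset.prod_range_succ]

private lemma degRising_split (l y : ℝ) (m n : ℕ) :
    degRising l y (m + n) = degRising l y m * degRising l (y + m * l) n := by
  unfold degRising
  rw [Finset.prod_range_add]
  congr 1
  refine Finset.prod_congr rfl fun i _ => ?_
  push_cast; ring

private lemma degFalling_add (l x : ℝ) (j i : ℕ) :
    degFalling l x (j + i) = degFalling l x j * degFalling l (x - j * l) i := by
  unfold degFalling
  rw [Finset.prod_range_add]
  congr 1
  refine Finset.prod_congr rfl fun q _ => ?_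
  push_cast; ring

private lemma degRising_mul_l (l c : ℝ) (p : ℕ) :
    degRising l (c * l) p = risingFac c p * l ^ p := by
  unfold degRising risingFac
  rw [← Finset.card_range p, ← Finset.prod_const, Finset.card_range, ← Finset.prod_mul_distrib]
  refine Finset.prod_congr rfl fun i _ => ?_
  ring

private lemma degFalling_nat (l : ℝ) (a s : ℕ) :
    degFalling l ((a : ℝ) * l) s = ((s.factorial : ℝ) * (a.choose s)) * l ^ s := by
  have h : degFalling l ((a : ℝ) * l) s = (∏ i ∈ range s, ((a : ℝ) - i)) * l ^ s := by
    unfold degFalling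
    rw [← Finset.card_range s, ← Finset.prod_const, Finset.card_range, ← Finset.prod_mul_distrib]
    exact Finset.prod_congr rfl fun i _ => by ring
  rw [h]
  congr 1
  by_cases hs : s ≤ a
  · have : ∀ i ∈ range s, ((a : ℝ) - i) = ((a - i : ℕ) : ℝ) := by
      intro i hi
      have : i ≤ a := le_trans (le_of_lt (mem_range.mp hi)) hs
      push_cast [this]; ring
    rw [Finset.prod_congr rfl this, ← Nat.cast_prod, ← Nat.descFactorial_eq_prod_range,
      Nat.descFactorial_eq_factorial_mul_choose]
    push_cast; ring
  · push_neg at hs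
    rw [Nat.choose_eq_zero_of_lt hs]
    rw [Finset.prod_eq_zero (mem_range.mpr hs) (by simp)]
    simp

private lemma degRising_vandermonde (l : ℝ) : ∀ (n : ℕ) (a b : ℝ),
    degRising l (a + b) n =
      ∑ k ∈ range (n + 1), (n.choose k : ℝ) * degRising l a k * degRising l b (n - k) := by
  intro n
  induction n with
  | zero => intro a b; simp [degRising]
  | succ n ih =>
    intro a b
    rw [degRising_succ, ih, Finset.sum_mul]
    have step : ∀ k ∈ range (n + 1),
        (n.choose k : ℝ) * degRising l a k * degRising l b (n - k) * (a + b + n * l)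
          = (n.choose k : ℝ) * degRising l a (k + 1) * degRising l b (n - k)
            + (n.choose k : ℝ) * degRising l a k * degRising l b (n + 1 - k) := by
      intro k hk
      have hkn : k ≤ n := by simpa [Nat.lt_succ_iff] using mem_range.mp hk
      have h1 : degRising l a (k + 1) = degRising l a k * (a + k * l) := degRising_succ ..
      have h2 : degRising l b (n + 1 - k) = degRising l b (n - k) * (b + (n - k : ℕ) * l) := by
        rw [show n + 1 - k = (n - k) + 1 by omega]; exact degRising_succ ..
      have hc : ((n - k : ℕ) : ℝ) = (n : ℝ) - k := by
        push_cast [hkn]; ring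
      rw [h1, h2, hc]; ring
    rw [Finset.sum_congr rfl step, Finset.sum_add_distrib]
    rw [Finset.sum_range_succ'
      (fun k => ((n + 1).choose k : ℝ) * degRising l a k * degRising l b (n + 1 - k)) (n + 1)]
    have e0 : ((n + 1).choose 0 : ℝ) * degRising l a 0 * degRising l b (n + 1 - 0)
        = degRising l b (n + 1) := by simp [degRising]
    rw [e0]
    have e1 : ∀ k ∈ range (n + 1),
        ((n + 1).choose (k + 1) : ℝ) * degRising l a (k + 1) * degRising l b (n + 1 - (k + 1))
          = (n.choose k : ℝ) * degRising l a (k + 1) * degRising l b (n - k)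
            + (n.choose (k + 1) : ℝ) * degRising l a (k + 1) * degRising l b (n - k) := by
      intro k hk
      rw [Nat.choose_succ_succ]
      push_cast
      simp only [Nat.succ_eq_add_one]
      ring
    rw [Finset.sum_congr rfl e1, Finset.sum_add_distrib]
    have e2 : ∑ k ∈ range (n + 1), (n.choose k : ℝ) * degRising l a k * degRising l b (n + 1 - k)
        = degRising l b (n + 1)
          + ∑ k ∈ range (n + 1), (n.choose (k + 1) : ℝ) * degRising l a (k + 1) * degRising l b (n - k) := by
      rw [Finset.sum_range_succ'
        (fun k => (n.choose k : ℝ) * degRising l a k * degRising l b (n + 1 - k)) n]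
      rw [Finset.sum_range_succ
        (fun k => (n.choose (k + 1) : ℝ) * degRising l a (k + 1) * degRising l b (n - k)) n]
      simp only [Nat.choose_succ_self, Nat.cast_zero, zero_mul, add_zero]
      have : ∀ k ∈ range n, (n.choose (k + 1) : ℝ) * degRising l a (k + 1) * degRising l b (n + 1 - (k + 1))
          = (n.choose (k + 1) : ℝ) * degRising l a (k + 1) * degRising l b (n - k) := by
        intro k hk
        have : n + 1 - (k + 1) = n - k := by omega
        rw [this]
      rw [Finset.sum_congr rfl this]
      simp [degRising]
      ring
    rw [e2]
    ring

private lemma choose_orth (s' s N : ℕ) (h : s' ≤ N) :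
    (∑ a ∈ range (N + 1), (-1 : ℝ) ^ (s' - a) * (s'.choose a) * (a.choose s))
      = if s' = s then 1 else 0 := by
  have hsub : range (s' + 1) ⊆ range (N + 1) := by
    intro x hx; simp only [mem_range] at *; omega
  rw [← Finset.sum_subset hsub (by
    intro x hx hx'
    simp only [mem_range] at hx hx'
    have hxx : s' < x := by omega
    rw [Nat.choose_eq_zero_of_lt hxx]; simp)]
  by_cases hss : s ≤ s'
  · have hd : s' + 1 = s + (s' - s + 1) := by omega
    rw [hd, Finset.sum_range_add]
    have h1 : (∑ a ∈ range s, (-1 : ℝ) ^ (s' - a) * (s'.choose a) * (a.choose s)) = 0 := by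
      refine Finset.sum_eq_zero fun a ha => ?_
      rw [Nat.choose_eq_zero_of_lt (mem_range.mp ha)]; simp
    rw [h1, zero_add]
    have h2 : ∀ b ∈ range (s' - s + 1),
        (-1 : ℝ) ^ (s' - (s + b)) * (s'.choose (s + b)) * ((s + b).choose s)
          = ((s'.choose s : ℝ)) * ((-1) ^ (s' - s) * ((-1) ^ b * ((s' - s).choose b))) := by
      intro b hb
      have hb' : b ≤ s' - s := by have := mem_range.mp hb; omega
      have hcm : (s'.choose (s + b)) * ((s + b).choose s)
          = s'.choose s * (s' - s).choose b := by
        have := Nat.choose_mul (n := s') (k := s + b) (s := s) (by omega)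
        simpa using this
      have sq : ((-1 : ℝ) ^ b) * ((-1 : ℝ) ^ b) = 1 := by
        rw [← pow_add, ← two_mul, pow_mul]; norm_num
      have he : s' - s = (s' - (s + b)) + b := by omega
      have hsgn : (-1 : ℝ) ^ (s' - (s + b)) = (-1) ^ (s' - s) * (-1) ^ b := by
        calc (-1 : ℝ) ^ (s' - (s + b))
            = (-1) ^ (s' - (s + b)) * ((-1 : ℝ) ^ b * (-1 : ℝ) ^ b) := by rw [sq, mul_one]
          _ = ((-1) ^ (s' - (s + b)) * (-1 : ℝ) ^ b) * (-1 : ℝ) ^ b := by ring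
          _ = (-1) ^ (s' - s) * (-1) ^ b := by rw [← pow_add, ← he]
      have hcast : ((s'.choose (s + b) : ℝ)) * (((s + b).choose s : ℝ))
          = (s'.choose s : ℝ) * ((s' - s).choose b : ℝ) := by
        exact_mod_cast congrArg (Nat.cast : ℕ → ℝ) hcm
      calc (-1 : ℝ) ^ (s' - (s + b)) * (s'.choose (s + b)) * ((s + b).choose s)
          = ((-1) ^ (s' - s) * (-1) ^ b) * ((s'.choose (s + b) : ℝ) * ((s + b).choose s : ℝ)) := by
            rw [hsgn]; ring
        _ = ((-1) ^ (s' - s) * (-1) ^ b) * ((s'.choose s : ℝ) * ((s' - s).choose b : ℝ)) := by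
            rw [hcast]
        _ = ((s'.choose s : ℝ)) * ((-1) ^ (s' - s) * ((-1) ^ b * ((s' - s).choose b))) := by ring
    rw [Finset.sum_congr rfl h2, ← Finset.mul_sum]
    have key : (∑ b ∈ range (s' - s + 1), ((-1 : ℝ)) ^ (s' - s) * ((-1) ^ b * ((s' - s).choose b)))
        = (-1) ^ (s' - s) * (if s' - s = 0 then 1 else 0) := by
      rw [← Finset.mul_sum]
      congr 1
      have := Int.alternating_sum_range_choose (n := s' - s)
      have h3 := congrArg (fun z : ℤ => (z : ℝ)) this
      push_cast at h3
      split_ifs with h4 <;> simp [h4] at h3 ⊢ <;> exact_mod_cast h3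
    rw [key]
    by_cases he : s' = s
    · subst he; simp
    · have : s' - s ≠ 0 := by omega
      simp [he, this]
  · push_neg at hss
    have : s' ≠ s := by omega
    rw [if_neg this]
    refine Finset.sum_eq_zero fun a ha => ?_
    have : a < s := by have := mem_range.mp ha; omega
    rw [Nat.choose_eq_zero_of_lt this]; simp

/-- Weights implementing the linear functional `(x)_{s,λ} ↦ t^s` on polynomials of degree ≤ N,
via evaluation at the points `a·λ`, `a = 0, …, N`. -/
private noncomputable def spiveyW (l t : ℝ) (N : ℕ) : ℕ → ℝ := fun a =>
  ∑ s' ∈ Finset.range (N + 1),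
    (-1 : ℝ) ^ (s' - a) * (s'.choose a) * (t ^ s' / (l ^ s' * (s'.factorial : ℝ)))

private lemma spivey_orth (l t : ℝ) (hl : l ≠ 0) (N s : ℕ) (hs : s ≤ N) :
    ∑ a ∈ Finset.range (N + 1), spiveyW l t N a * degFalling l ((a : ℝ) * l) s = t ^ s := by
  have e1 : ∀ a ∈ Finset.range (N + 1), spiveyW l t N a * degFalling l ((a : ℝ) * l) s
      = ∑ s' ∈ Finset.range (N + 1),
          (t ^ s' / (l ^ s' * (s'.factorial : ℝ)) * ((s.factorial : ℝ) * l ^ s))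
            * ((-1 : ℝ) ^ (s' - a) * (s'.choose a) * (a.choose s)) := by
    intro a _
    rw [spiveyW, degFalling_nat, Finset.sum_mul]
    exact Finset.sum_congr rfl fun s' _ => by ring
  rw [Finset.sum_congr rfl e1, Finset.sum_comm]
  have e2 : ∀ s' ∈ Finset.range (N + 1),
      (∑ a ∈ Finset.range (N + 1),
          (t ^ s' / (l ^ s' * (s'.factorial : ℝ)) * ((s.factorial : ℝ) * l ^ s))
            * ((-1 : ℝ) ^ (s' - a) * (s'.choose a) * (a.choose s)))
        = (t ^ s' / (l ^ s' * (s'.factorial : ℝ)) * ((s.factorial : ℝ) * l ^ s))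
            * (if s' = s then 1 else 0) := by
    intro s' hs'
    rw [← Finset.mul_sum,
      choose_orth s' s N (by simpa [Nat.lt_succ_iff] using Finset.mem_range.mp hs')]
  rw [Finset.sum_congr rfl e2]
  rw [Finset.sum_eq_single s]
  · rw [if_pos rfl, mul_one]
    have h1 : (l : ℝ) ^ s ≠ 0 := pow_ne_zero _ hl
    have h2 : ((s.factorial : ℝ)) ≠ 0 := Nat.cast_ne_zero.mpr s.factorial_ne_zero
    field_simp
  · intro b _ hb; rw [if_neg hb, mul_zero]
  · intro hmem; exact absurd (Finset.mem_range.mpr (by omega)) hmem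

end SpiveyAux

/-- Spivey's type formula for the λ-analogue of the r-Lah-Bell polynomials, where the
λ-analogue of the r-Lah numbers L is defined by ⟨x+r⟩_{n,λ} = Σ_{k=0}^n L(n,k)(x)_{k,λ},
and LB_{n,λ}⁽ʳ⁾(t) = Σ_{k=0}^n L(n,k) tᵏ. -/
theorem degRLahBell_spivey (l : ℝ) (hl : l ≠ 0) (L : ℕ → ℕ → ℝ) (r m n : ℕ) (t : ℝ)
    (hL : ∀ (p : ℕ) (x : ℝ),
      degRising l (x + r) p = ∑ j ∈ Finset.range (p + 1), L p j * degFalling l x j) :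
    (∑ k ∈ Finset.range (n + m + 1), L (n + m) k * t ^ k) =
      ∑ j ∈ Finset.range (m + 1), ∑ k ∈ Finset.range (n + 1),
        (n.choose k : ℝ) * L m j * risingFac ((m : ℝ) + j) (n - k) * t ^ j * l ^ (n - k) *
          (∑ i ∈ Finset.range (k + 1), L k i * t ^ i) := by
  classical
  set w : ℕ → ℝ := spiveyW l t (n + m) with hw
  have orth : ∀ s, s ≤ n + m →
      ∑ a ∈ Finset.range (n + m + 1), w a * degFalling l ((a : ℝ) * l) s = t ^ s :=
    fun s hs => spivey_orth l t hl (n + m) s hs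
  -- the key polynomial identity, valid for every real x
  have key : ∀ x : ℝ, degRising l (x + (r : ℝ)) (n + m)
      = ∑ j ∈ Finset.range (m + 1), ∑ k ∈ Finset.range (n + 1), ∑ i ∈ Finset.range (k + 1),
          ((n.choose k : ℝ) * L m j * risingFac ((m : ℝ) + j) (n - k) * l ^ (n - k) * L k i)
            * degFalling l x (j + i) := by
    intro x
    have e1 : degRising l (x + (r : ℝ)) (n + m)
        = degRising l (x + (r : ℝ)) m * degRising l ((x + (r : ℝ)) + m * l) n := by
      rw [show n + m = m + n from Nat.add_comm n m]
      exact degRising_split l (x + (r : ℝ)) m n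
    rw [e1, hL m x, Finset.sum_mul]
    refine Finset.sum_congr rfl fun j hj => ?_
    have e2 : degRising l ((x + (r : ℝ)) + m * l) n
        = ∑ k ∈ Finset.range (n + 1), (n.choose k : ℝ)
            * degRising l ((x - j * l) + (r : ℝ)) k
            * (risingFac ((m : ℝ) + j) (n - k) * l ^ (n - k)) := by
      have harg : (x + (r : ℝ)) + (m : ℝ) * l = ((x - j * l) + (r : ℝ)) + ((m : ℝ) + (j : ℝ)) * l := by
        ring
      rw [harg, degRising_vandermonde l n ((x - j * l) + (r : ℝ)) (((m : ℝ) + j) * l)]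
      exact Finset.sum_congr rfl fun k _ => by rw [degRising_mul_l]
    rw [e2, Finset.mul_sum]
    refine Finset.sum_congr rfl fun k hk => ?_
    rw [hL k (x - j * l), Finset.mul_sum, Finset.sum_mul, Finset.mul_sum]
    refine Finset.sum_congr rfl fun i hi => ?_
    rw [degFalling_add l x j i]
    ring
  -- step 1: express the left side through the functional
  have step1 : (∑ k ∈ Finset.range (n + m + 1), L (n + m) k * t ^ k)
      = ∑ a ∈ Finset.range (n + m + 1), w a * degRising l (((a : ℝ) * l) + r) (n + m) := by
    have h1 : ∀ s ∈ Finset.range (n + m + 1), L (n + m) s * t ^ s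
        = ∑ a ∈ Finset.range (n + m + 1),
            w a * (L (n + m) s * degFalling l ((a : ℝ) * l) s) := by
      intro s hs
      rw [← orth s (by simpa [Nat.lt_succ_iff] using Finset.mem_range.mp hs), Finset.mul_sum]
      exact Finset.sum_congr rfl fun a _ => by ring
    rw [Finset.sum_congr rfl h1, Finset.sum_comm]
    refine Finset.sum_congr rfl fun a _ => ?_
    rw [← Finset.mul_sum, ← hL (n + m) ((a : ℝ) * l)]
  rw [step1]
  -- step 2: substitute the key identity and swap the sums
  have h2 : ∀ a ∈ Finset.range (n + m + 1),
      w a * degRising l (((a : ℝ) * l) + r) (n + m)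
        = ∑ j ∈ Finset.range (m + 1), ∑ k ∈ Finset.range (n + 1), ∑ i ∈ Finset.range (k + 1),
            w a * (((n.choose k : ℝ) * L m j * risingFac ((m : ℝ) + j) (n - k) * l ^ (n - k)
              * L k i) * degFalling l ((a : ℝ) * l) (j + i)) := by
    intro a _
    rw [key ((a : ℝ) * l)]
    simp only [Finset.mul_sum]
  rw [Finset.sum_congr rfl h2, Finset.sum_comm]
  refine Finset.sum_congr rfl fun j hj => ?_
  rw [Finset.sum_comm]
  refine Finset.sum_congr rfl fun k hk => ?_
  have hj' : j ≤ m := by simpa [Nat.lt_succ_iff] using Finset.mem_range.mp hj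
  have hk' : k ≤ n := by simpa [Nat.lt_succ_iff] using Finset.mem_range.mp hk
  rw [Finset.sum_comm, Finset.mul_sum]
  refine Finset.sum_congr rfl fun i hi => ?_
  have hi' : i ≤ k := by simpa [Nat.lt_succ_iff] using Finset.mem_range.mp hi
  have hji : j + i ≤ n + m := by omega
  have : ∑ a ∈ Finset.range (n + m + 1),
      w a * (((n.choose k : ℝ) * L m j * risingFac ((m : ℝ) + j) (n - k) * l ^ (n - k) * L k i)
        * degFalling l ((a : ℝ) * l) (j + i))
      = ((n.choose k : ℝ) * L m j * risingFac ((m : ℝ) + j) (n - k) * l ^ (n - k) * L k i)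
          * t ^ (j + i) := by
    rw [← orth (j + i) hji, Finset.mul_sum]
    exact Finset.sum_congr rfl fun a _ => by ring
  rw [this, pow_add]
  ring
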